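/- For every integer k ≥ 2, the polynomial P_k(x) = x³ − (2k+4)x² + (k+4)x − 1 is irreducible over ℚ and has three real roots; exactly one root β_k satisfies β_k > 1, the other two roots have absolute value strictly less than 1, and consequently β_k is a Pisot number of degree 3. -/

import Mathlib

open Polynomial

/-- A Pisot number: a real algebraic integer `β > 1` all of whose Galois conjugates
(the other complex roots of its minimal polynomial over `ℚ`) have modulus `< 1`. -/
def IsPisot (β : ℝ) : Prop :=
  1 < β ∧ IsIntegral ℤ β ∧
    ∀ z : ℂ, z ≠ (β : ℂ) → Polynomial.aeval z (minpoly ℚ β) = 0 → ‖z‖ < 1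

/-- The Do–Schmidt polynomial `P_k(x) = x³ − (2k+4)x² + (k+4)x − 1`. -/
noncomputable def Pk (k : ℕ) : Polynomial ℚ :=
  X ^ 3 - C ((2 * k + 4 : ℕ) : ℚ) * X ^ 2 + C ((k + 4 : ℕ) : ℚ) * X - C 1

noncomputable def PkZ (k : ℕ) : Polynomial ℤ :=
  X ^ 3 - C ((2 * k + 4 : ℕ) : ℤ) * X ^ 2 + C ((k + 4 : ℕ) : ℤ) * X - C 1

lemma PkZ_map (k : ℕ) : (PkZ k).map (algebraMap ℤ ℚ) = Pk k := by
  simp only [PkZ, Pk, Polynomial.map_sub, Polynomial.map_add, Polynomial.map_mul,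
    Polynomial.map_pow, Polynomial.map_X, Polynomial.map_C]
  norm_num

lemma Pk_natDegree (k : ℕ) : (Pk k).natDegree = 3 := by
  unfold Pk; compute_degree!

lemma Pk_monic (k : ℕ) : (Pk k).Monic := by
  unfold Pk; monicity!

lemma PkZ_monic (k : ℕ) : (PkZ k).Monic := by
  unfold PkZ; monicity!

lemma aeval_Pk_rat (k : ℕ) (x : ℚ) : aeval x (Pk k) = x^3 - (2*k+4)*x^2 + (k+4)*x - 1 := by
  simp only [Pk, map_sub, map_add, map_mul, aeval_X_pow, aeval_X, aeval_C, map_one, map_natCast]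
  push_cast; ring

lemma aeval_Pk_real (k : ℕ) (x : ℝ) : aeval x (Pk k) = x^3 - (2*k+4)*x^2 + (k+4)*x - 1 := by
  simp only [Pk, map_sub, map_add, map_mul, aeval_X_pow, aeval_X, aeval_C, map_one, map_natCast]
  push_cast; ring

lemma aeval_Pk_complex (k : ℕ) (x : ℂ) : aeval x (Pk k) = x^3 - (2*k+4)*x^2 + (k+4)*x - 1 := by
  simp only [Pk, map_sub, map_add, map_mul, aeval_X_pow, aeval_X, aeval_C, map_one, map_natCast]
  push_cast; ring

lemma aeval_PkZ_real (k : ℕ) (x : ℝ) : aeval x (PkZ k) = x^3 - (2*k+4)*x^2 + (k+4)*x - 1 := by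
  simp only [PkZ, map_sub, map_add, map_mul, aeval_X_pow, aeval_X, aeval_C, map_one, map_natCast]
  push_cast; ring

lemma aeval_PkZ_rat (k : ℕ) (x : ℚ) : aeval x (PkZ k) = aeval x (Pk k) := by
  rw [← PkZ_map, aeval_map_algebraMap]

lemma PkZ_coeff_zero (k : ℕ) : (PkZ k).coeff 0 = -1 := by
  simp [PkZ, coeff_X, coeff_one]

lemma Pk_irreducible (k : ℕ) (hk : 2 ≤ k) : Irreducible (Pk k) := by
  rw [irreducible_iff_roots_eq_zero_of_degree_le_three (by rw [Pk_natDegree]; norm_num) (by rw [Pk_natDegree])]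
  rw [Multiset.eq_zero_iff_forall_notMem]
  intro x hx
  have hx0 : aeval x (Pk k) = 0 := by
    have := (mem_roots (Pk_monic k).ne_zero).mp hx
    simpa [IsRoot, aeval_def] using this
  have hxz : aeval x (PkZ k) = 0 := by rw [aeval_PkZ_rat]; exact hx0
  obtain ⟨n, rfl, hn⟩ := exists_integer_of_is_root_of_monic (PkZ_monic k) hxz
  rw [PkZ_coeff_zero] at hn
  have hn1 : n = 1 ∨ n = -1 := Int.isUnit_iff.mp (isUnit_of_dvd_one (dvd_neg.mp hn))
  have hk' : (2:ℚ) ≤ k := by exact_mod_cast hk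
  rcases hn1 with rfl | rfl
  · rw [aeval_Pk_rat] at hx0; push_cast at hx0; linarith
  · rw [aeval_Pk_rat] at hx0; push_cast at hx0; linarith

lemma complex_root_eq (k : ℕ) {r1 r2 r3 : ℝ}
    (h1 : aeval r1 (Pk k) = 0) (h2 : aeval r2 (Pk k) = 0) (h3 : aeval r3 (Pk k) = 0)
    (d12 : r1 ≠ r2) (d13 : r1 ≠ r3) (d23 : r2 ≠ r3)
    {z : ℂ} (hz : aeval z (Pk k) = 0) : z = r1 ∨ z = r2 ∨ z = r3 := by
  by_contra h
  push_neg at h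
  obtain ⟨hz1, hz2, hz3⟩ := h
  set Q : Polynomial ℂ := (Pk k).map (algebraMap ℚ ℂ) with hQ
  have hQne : Q ≠ 0 := ((Pk_monic k).map _).ne_zero
  have hQdeg : Q.natDegree = 3 := by
    rw [hQ, natDegree_map, Pk_natDegree]
  have hmem : ∀ w : ℂ, aeval w (Pk k) = 0 → w ∈ Q.roots := by
    intro w hw
    rw [mem_roots hQne]
    rw [IsRoot.def, hQ, eval_map, ← aeval_def]; exact hw
  have hreal : ∀ r : ℝ, aeval r (Pk k) = 0 → aeval (r : ℂ) (Pk k) = 0 := by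
    intro r hr
    rw [aeval_Pk_complex]
    rw [aeval_Pk_real] at hr
    exact_mod_cast congrArg (Complex.ofReal) hr
  have m1 := hmem _ (hreal _ h1)
  have m2 := hmem _ (hreal _ h2)
  have m3 := hmem _ (hreal _ h3)
  have mz := hmem _ hz
  have e12 : (r1 : ℂ) ≠ r2 := by exact_mod_cast d12
  have e13 : (r1 : ℂ) ≠ r3 := by exact_mod_cast d13
  have e23 : (r2 : ℂ) ≠ r3 := by exact_mod_cast d23
  have hsub : ({z, (r1:ℂ), (r2:ℂ), (r3:ℂ)} : Finset ℂ) ⊆ Q.roots.toFinset := by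
    intro w hw
    simp only [Finset.mem_insert, Finset.mem_singleton] at hw
    rw [Multiset.mem_toFinset]
    rcases hw with rfl | rfl | rfl | rfl <;> assumption
  have hcard : ({z, (r1:ℂ), (r2:ℂ), (r3:ℂ)} : Finset ℂ).card = 4 := by
    rw [Finset.card_insert_of_notMem (by simp [hz1, hz2, hz3]),
      Finset.card_insert_of_notMem (by simp [e12, e13]),
      Finset.card_insert_of_notMem (by simp [e23]), Finset.card_singleton]
  have h4 : 4 ≤ Q.roots.card := by
    calc 4 = ({z, (r1:ℂ), (r2:ℂ), (r3:ℂ)} : Finset ℂ).card := hcard.symm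
    _ ≤ Q.roots.toFinset.card := Finset.card_le_card hsub
    _ ≤ Q.roots.card := Multiset.toFinset_card_le _
  have := Q.card_roots' -- roots.card ≤ natDegree
  omega

theorem stmt_15 (k : ℕ) (hk : 2 ≤ k) :
    Irreducible (Pk k) ∧
    (∀ z : ℂ, aeval z (Pk k) = 0 → z.im = 0) ∧
    ∃ β : ℝ, aeval β (Pk k) = 0 ∧ 1 < β ∧
      (∀ γ : ℝ, aeval γ (Pk k) = 0 → 1 < γ → γ = β) ∧
      (∀ z : ℂ, aeval z (Pk k) = 0 → z ≠ (β : ℂ) → ‖z‖ < 1) ∧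
      IsPisot β ∧ (minpoly ℚ β).natDegree = 3 := by
  have hk' : (2:ℝ) ≤ k := by exact_mod_cast hk
  set f : ℝ → ℝ := fun x => x^3 - (2*k+4)*x^2 + (k+4)*x - 1 with hf
  have hfa : ∀ x : ℝ, aeval x (Pk k) = f x := fun x => aeval_Pk_real k x
  have hc : Continuous f := by unfold f; continuity
  have h0 : f 0 = -1 := by simp [hf]
  have hhalf : f (1/2) = 1/8 := by simp only [hf]; ring
  have hone : f 1 = -k := by simp only [hf]; ring
  have hbig : 0 < f (2*k+4) := by
    simp only [hf]
    nlinarith [hk']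
  -- root r1 ∈ (0, 1/2)
  obtain ⟨r1, hr1m, hr1⟩ := intermediate_value_Ioo (by norm_num : (0:ℝ) ≤ 1/2)
    hc.continuousOn (by rw [h0, hhalf]; constructor <;> norm_num : (0:ℝ) ∈ Set.Ioo (f 0) (f (1/2)))
  -- root r2 ∈ (1/2, 1)
  obtain ⟨r2, hr2m, hr2⟩ := intermediate_value_Ioo' (by norm_num : (1:ℝ)/2 ≤ 1)
    hc.continuousOn (by rw [hone, hhalf]; constructor <;> [linarith; norm_num] : (0:ℝ) ∈ Set.Ioo (f 1) (f (1/2)))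
  -- root β ∈ (1, 2k+4)
  obtain ⟨β, hβm, hβ0⟩ := intermediate_value_Ioo (by linarith : (1:ℝ) ≤ 2*k+4)
    hc.continuousOn (by rw [hone]; constructor <;> linarith : (0:ℝ) ∈ Set.Ioo (f 1) (f (2*k+4)))
  obtain ⟨hr1a, hr1b⟩ := hr1m
  obtain ⟨hr2a, hr2b⟩ := hr2m
  obtain ⟨hβa, _⟩ := hβm
  have hroot1 : aeval r1 (Pk k) = 0 := by rw [hfa]; exact hr1
  have hroot2 : aeval r2 (Pk k) = 0 := by rw [hfa]; exact hr2
  have hrootβ : aeval β (Pk k) = 0 := by rw [hfa]; exact hβ0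
  have d12 : r1 ≠ r2 := by linarith
  have d13 : r1 ≠ β := by linarith
  have d23 : r2 ≠ β := by linarith
  have hclass : ∀ z : ℂ, aeval z (Pk k) = 0 → z = r1 ∨ z = r2 ∨ z = β :=
    fun z hz => complex_root_eq k hroot1 hroot2 hrootβ d12 d13 d23 hz
  have hirr := Pk_irreducible k hk
  have hmin : minpoly ℚ β = Pk k :=
    (minpoly.eq_of_irreducible_of_monic hirr hrootβ (Pk_monic k)).symm
  have habs : ∀ z : ℂ, aeval z (Pk k) = 0 → z ≠ (β : ℂ) → ‖z‖ < 1 := by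
    intro z hz hzβ
    rcases hclass z hz with rfl | rfl | rfl
    · rw [Complex.norm_real, Real.norm_eq_abs, abs_of_pos hr1a]; linarith
    · rw [Complex.norm_real, Real.norm_eq_abs, abs_of_pos (by linarith : (0:ℝ) < r2)]; linarith
    · exact absurd rfl hzβ
  refine ⟨hirr, ?_, β, hrootβ, hβa, ?_, habs, ⟨hβa, ?_, ?_⟩, ?_⟩
  · intro z hz
    rcases hclass z hz with rfl | rfl | rfl <;> simp
  · intro γ hγ hγ1
    have : (γ:ℂ) = (r1:ℝ) ∨ (γ:ℂ) = (r2:ℝ) ∨ (γ:ℂ) = (β:ℝ) := by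
      apply hclass
      rw [aeval_Pk_complex]
      rw [hfa] at hγ
      simp only [hf] at hγ
      exact_mod_cast congrArg (Complex.ofReal) hγ
    rcases this with h | h | h
    · have : γ = r1 := by exact_mod_cast h
      linarith
    · have : γ = r2 := by exact_mod_cast h
      linarith
    · exact_mod_cast h
  · -- IsIntegral ℤ β
    refine ⟨PkZ k, PkZ_monic k, ?_⟩
    rw [← aeval_def, aeval_PkZ_real]
    exact hβ0
  · -- conjugates
    intro z hzβ hz
    rw [hmin] at hz
    exact habs z hz hzβ
  · rw [hmin, Pk_natDegree]
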